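/- Let p be a prime and n ≥ 1 an integer. There exists a bijection B from the set FP(g_p^n) = {x ∈ [0,1] : g_p^n(x) = x} (where g_p^n denotes the n-fold iterate) to the finite field F_{p^n} with p^n elements such that B(x)^p = B(g_p(x)) for every x ∈ FP(g_p^n). (Note that g_p maps FP(g_p^n) into itself.) -/

import Mathlib

/-- The continuous piecewise linear map `g_p : [0,1] → [0,1]` that goes up and down
`p` times: on `[k/p, (k+1)/p]` it is `x ↦ p·x − k` for `k` even and
`x ↦ k + 1 − p·x` for `k` odd. -/
noncomputable def gp (p : ℕ) (x : ℝ) : ℝ :=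
  if Even ⌊(p : ℝ) * x⌋ then (p : ℝ) * x - ⌊(p : ℝ) * x⌋
  else (⌊(p : ℝ) * x⌋ : ℝ) + 1 - (p : ℝ) * x

noncomputable def tf (t : ℝ) : ℝ :=
  if Even ⌊t⌋ then t - ⌊t⌋ else (⌊t⌋ : ℝ) + 1 - t

lemma tf_mem (t : ℝ) : tf t ∈ Set.Icc (0:ℝ) 1 := by
  have h1 := Int.floor_le t
  have h2 := Int.lt_floor_add_one t
  unfold tf
  split <;> constructor <;> linarith

lemma tf_spec (t : ℝ) : ∃ k : ℤ, tf t = t - 2*k ∨ tf t = 2*k - t := by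
  unfold tf
  by_cases h : Even ⌊t⌋
  · rw [if_pos h]
    obtain ⟨k, hk⟩ := h
    exact ⟨k, Or.inl (by rw [hk]; push_cast; ring)⟩
  · rw [if_neg h]
    obtain ⟨k, hk⟩ := Int.not_even_iff_odd.mp h
    exact ⟨k + 1, Or.inr (by rw [hk]; push_cast; ring)⟩

lemma tf_add_two_int (t : ℝ) (k : ℤ) : tf (t + 2*k) = tf t := by
  have hfl : ⌊t + 2*(k:ℝ)⌋ = ⌊t⌋ + 2*k := by
    rw [show t + 2*(k:ℝ) = t + ((2*k : ℤ) : ℝ) by push_cast; ring, Int.floor_add_intCast]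
  have hev : Even (⌊t⌋ + 2*k) ↔ Even ⌊t⌋ := by
    constructor <;> intro h
    · have := h.sub (even_two_mul k); simpa using this
    · exact h.add (even_two_mul k)
  unfold tf
  rw [hfl]
  by_cases h : Even ⌊t⌋
  · rw [if_pos (hev.mpr h), if_pos h]; push_cast; ring
  · rw [if_neg (fun hc => h (hev.mp hc)), if_neg h]; push_cast; ring

lemma tf_neg (t : ℝ) : tf (-t) = tf t := by
  by_cases ht : ∃ m : ℤ, t = m
  · obtain ⟨m, rfl⟩ := ht
    unfold tf
    rw [Int.floor_intCast, show -(m:ℝ) = ((-m : ℤ) : ℝ) by push_cast; ring,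
      Int.floor_intCast]
    by_cases h : Even m
    · rw [if_pos h.neg, if_pos h]; push_cast; ring
    · rw [if_neg (fun hc => h (by simpa using hc.neg)), if_neg h]; push_cast; ring
  · have h1 : (⌊t⌋ : ℝ) < t := by
      rcases lt_or_eq_of_le (Int.floor_le t) with h | h
      · exact h
      · exact absurd ⟨⌊t⌋, h.symm⟩ ht
    have h2 := Int.lt_floor_add_one t
    have hfl : ⌊-t⌋ = -⌊t⌋ - 1 := by
      rw [Int.floor_eq_iff] <;> push_cast <;> constructor <;> linarith
    have hev : Even (-⌊t⌋ - 1) ↔ ¬ Even ⌊t⌋ := by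
      simp only [Int.even_iff, Int.not_even_iff]
      omega
    unfold tf
    rw [hfl]
    by_cases h : Even ⌊t⌋
    · rw [if_neg (by rw [hev]; simpa), if_pos h]; push_cast; ring
    · rw [if_pos (hev.mpr h), if_neg h]; push_cast; ring

lemma tf_fix {x : ℝ} (hx : x ∈ Set.Icc (0:ℝ) 1) : tf x = x := by
  obtain ⟨h0, h1⟩ := hx
  rcases lt_or_eq_of_le h1 with h | h
  · have : ⌊x⌋ = 0 := by rw [Int.floor_eq_iff] <;> simp <;> constructor <;> linarith
    unfold tf; rw [this, if_pos Even.zero]; simp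
  · subst h; unfold tf; norm_num

lemma tf_congr {s t : ℝ} (h : ∃ k : ℤ, s = t + 2*k ∨ s = -t + 2*k) : tf s = tf t := by
  obtain ⟨k, h | h⟩ := h
  · rw [h, tf_add_two_int]
  · rw [h, tf_add_two_int, tf_neg]

lemma tf_mul_tf (c : ℤ) (t : ℝ) : tf (c * tf t) = tf (c * t) := by
  obtain ⟨k, h | h⟩ := tf_spec t
  · apply tf_congr
    exact ⟨-(c*k), Or.inl (by rw [h]; push_cast; ring)⟩
  · apply tf_congr
    exact ⟨c*k, Or.inr (by rw [h]; push_cast; ring)⟩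

lemma gp_eq_tf (p : ℕ) (x : ℝ) : gp p x = tf ((p:ℝ) * x) := rfl

lemma gp_iterate (p : ℕ) (m : ℕ) {x : ℝ} (hx : x ∈ Set.Icc (0:ℝ) 1) :
    (gp p)^[m] x = tf ((p:ℝ)^m * x) := by
  induction m with
  | zero => simpa using (tf_fix hx).symm
  | succ m ih =>
    rw [Function.iterate_succ_apply', ih, gp_eq_tf,
      show ((p:ℝ)) = ((p:ℤ):ℝ) by push_cast; ring, tf_mul_tf]
    congr 1
    push_cast; ring

lemma fix_char (p n : ℕ) {x : ℝ} (hx : x ∈ Set.Icc (0:ℝ) 1) :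
    (gp p)^[n] x = x ↔ ∃ k : ℤ, ((p:ℝ)^n - 1) * x = 2*k ∨ ((p:ℝ)^n + 1) * x = 2*k := by
  rw [gp_iterate p n hx]
  constructor
  · intro h
    obtain ⟨k, hk | hk⟩ := tf_spec ((p:ℝ)^n * x)
    · exact ⟨k, Or.inl (by rw [h] at hk; linarith)⟩
    · exact ⟨k, Or.inr (by rw [h] at hk; linarith)⟩
  · rintro ⟨k, hk | hk⟩
    · rw [show (p:ℝ)^n * x = x + 2*k by linarith, tf_add_two_int, tf_fix hx]
    · rw [show (p:ℝ)^n * x = -x + 2*k by linarith, tf_add_two_int, tf_neg, tf_fix hx]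

set_option maxHeartbeats 2000000 in
/-- There is a bijection `B` from the fixed points of `g_p^n` to `F_{p^n}` such that
`B(x)^p = B(g_p(x))` for every fixed point `x` of `g_p^n`. -/
theorem exists_bijection_fixedPoints_galoisField (p n : ℕ) [Fact p.Prime] (hn : 1 ≤ n) :
    ∃ B : ℝ → GaloisField p n,
      Set.BijOn B {x ∈ Set.Icc (0 : ℝ) 1 | (gp p)^[n] x = x} Set.univ ∧
      ∀ x ∈ {x ∈ Set.Icc (0 : ℝ) 1 | (gp p)^[n] x = x}, B x ^ p = B (gp p x) := by
  classical
  have hp : p.Prime := Fact.out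
  set q : ℕ := p ^ n with hqdef
  have hq2 : 2 ≤ q := by
    have : 2^1 ≤ p^n := Nat.pow_le_pow_left hp.two_le 1 |>.trans (Nat.pow_le_pow_right hp.pos hn)
    simpa using this
  set N : ℕ := p ^ (2*n) - 1 with hNdef
  have hqq : p ^ (2*n) = q^2 := by rw [hqdef, ← pow_mul, Nat.mul_comm]
  have hN3 : 3 ≤ N := by
    have : 4 ≤ q^2 := by nlinarith
    omega
  have hN1 : N + 1 = q^2 := by
    have h1 : 1 ≤ p ^ (2*n) := Nat.one_le_pow _ _ hp.pos
    rw [hNdef, hqq] at *; omega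
  have hNZ : (N:ℤ) = (q:ℤ)^2 - 1 := by
    have := congrArg (Nat.cast : ℕ → ℤ) hN1; push_cast at this; linarith
  have hNR : (N:ℝ) = ((q:ℝ) - 1) * ((q:ℝ) + 1) := by
    have := congrArg (Nat.cast : ℕ → ℝ) hN1; push_cast at this; nlinarith [this]
  -- set of fixed points
  set S : Set ℝ := {x ∈ Set.Icc (0 : ℝ) 1 | (gp p)^[n] x = x} with hSdef
  have hSchar : ∀ x, x ∈ S ↔ x ∈ Set.Icc (0:ℝ) 1 ∧
      ∃ k : ℤ, ((q:ℝ) - 1) * x = 2*k ∨ ((q:ℝ) + 1) * x = 2*k := by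
    intro x
    constructor
    · rintro ⟨hx, hfix⟩
      refine ⟨hx, ?_⟩
      have := (fix_char p n hx).mp hfix
      simpa [hqdef] using this
    · rintro ⟨hx, hk⟩
      refine ⟨hx, (fix_char p n hx).mpr ?_⟩
      simpa [hqdef] using hk
  -- ambient algebraically closed field
  set Ω := AlgebraicClosure (ZMod p) with hΩdef
  have h2n : 2*n ≠ 0 := by omega
  -- the cyclic generator
  set W := GaloisField p (2*n) with hWdef
  haveI : Fintype W := Fintype.ofFinite W
  have hcardW : Fintype.card W = q^2 := by
    rw [← Nat.card_eq_fintype_card, GaloisField.card p (2*n) h2n, hqq]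
  obtain ⟨g, hg⟩ := IsCyclic.exists_generator (α := Wˣ)
  have horder : orderOf g = N := by
    rw [orderOf_eq_card_of_forall_mem_zpowers hg, Nat.card_eq_fintype_card,
      Fintype.card_units, hcardW]
    omega
  -- embed W into Ω
  haveI : Algebra.IsAlgebraic (ZMod p) W := Algebra.IsAlgebraic.of_finite (ZMod p) W
  let e2 : W →ₐ[ZMod p] Ω := IsAlgClosed.lift
  have he2 : Function.Injective e2 := e2.toRingHom.injective
  set ζ : Ω := e2 (g : W) with hζdef
  have horderζ : orderOf ζ = N := by
    have h := orderOf_injective (e2 : W →* Ω) he2 (g : W)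
    exact h.trans (orderOf_units.trans horder)
  have hζ : IsPrimitiveRoot ζ N := horderζ ▸ IsPrimitiveRoot.orderOf ζ
  haveI : NeZero N := ⟨by omega⟩
  have hζ0 : ζ ≠ 0 := by
    intro h
    have := hζ.pow_eq_one
    rw [h, zero_pow (by omega : N ≠ 0)] at this
    exact zero_ne_one this
  have hN0 : (N:ℝ) ≠ 0 := by positivity
  -- the integer associated to a fixed point
  set M : ℝ → ℤ := fun x => ⌊x * N / 2⌋ with hMdef
  have hM : ∀ {x : ℝ}, (∃ k : ℤ, ((q:ℝ)-1)*x = 2*k ∨ ((q:ℝ)+1)*x = 2*k) →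
      2*((M x : ℤ):ℝ) = x*N := by
    rintro x ⟨k, hk | hk⟩
    · have hx2 : x * N / 2 = ((k * ((q:ℤ)+1) : ℤ) : ℝ) := by
        push_cast
        rw [hNR]
        linear_combination (((q:ℝ)+1)/2) * hk
      have hMx : M x = k * ((q:ℤ)+1) := by
        simp only [hMdef]
        rw [hx2, Int.floor_intCast]
      rw [hMx]
      push_cast
      rw [hNR]
      linear_combination (-(q:ℝ)-1) * hk
    · have hx2 : x * N / 2 = ((k * ((q:ℤ)-1) : ℤ) : ℝ) := by
        push_cast
        rw [hNR]
        linear_combination (((q:ℝ)-1)/2) * hk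
      have hMx : M x = k * ((q:ℤ)-1) := by
        simp only [hMdef]
        rw [hx2, Int.floor_intCast]
      rw [hMx]
      push_cast
      rw [hNR]
      linear_combination (-(q:ℝ)+1) * hk
  have hMS : ∀ x ∈ S, 2*((M x : ℤ):ℝ) = x*N := fun x hx => hM ((hSchar x).mp hx).2
  -- S is closed under gp p
  have hSg : ∀ x ∈ S, gp p x ∈ S := by
    intro x hx
    rw [hSchar] at hx ⊢
    obtain ⟨hx1, k, hk⟩ := hx
    refine ⟨by rw [gp_eq_tf]; exact tf_mem _, ?_⟩
    obtain ⟨j, hj | hj⟩ := tf_spec ((p:ℝ) * x)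
    · rcases hk with hk | hk
      · exact ⟨(p:ℤ)*k - j*((q:ℤ)-1), Or.inl (by
          rw [gp_eq_tf, hj]; push_cast; linear_combination (p:ℝ) * hk)⟩
      · exact ⟨(p:ℤ)*k - j*((q:ℤ)+1), Or.inr (by
          rw [gp_eq_tf, hj]; push_cast; linear_combination (p:ℝ) * hk)⟩
    · rcases hk with hk | hk
      · exact ⟨j*((q:ℤ)-1) - (p:ℤ)*k, Or.inl (by
          rw [gp_eq_tf, hj]; push_cast; linear_combination (-(p:ℝ)) * hk)⟩
      · exact ⟨j*((q:ℤ)+1) - (p:ℤ)*k, Or.inr (by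
          rw [gp_eq_tf, hj]; push_cast; linear_combination (-(p:ℝ)) * hk)⟩
  -- roots of unity arithmetic
  have hζN : ζ ^ ((N:ℤ)) = 1 := by rw [zpow_natCast]; exact hζ.pow_eq_one
  have hshift : ∀ (a j : ℤ), ζ ^ (a + (N:ℤ)*j) = ζ ^ a := by
    intro a j
    rw [zpow_add₀ hζ0, zpow_mul, hζN, one_zpow, mul_one]
  -- the map to Ω
  set Cf : ℝ → Ω := fun x => ζ ^ (M x) + ζ ^ (-(M x)) with hCfdef
  have hpows : ∀ (r : ℕ) (m : ℤ), (ζ^m + ζ^(-m))^(p^r) =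
      ζ ^ (((p^r : ℕ):ℤ)*m) + ζ ^ (-(((p^r : ℕ):ℤ)*m)) := by
    intro r m
    rw [add_pow_char_pow, ← zpow_natCast (ζ^m) (p^r), ← zpow_mul,
      ← zpow_natCast (ζ^(-m)) (p^r), ← zpow_mul,
      show m * ((p^r : ℕ):ℤ) = ((p^r : ℕ):ℤ)*m by ring,
      show (-m) * ((p^r : ℕ):ℤ) = -(((p^r : ℕ):ℤ)*m) by ring]
  -- Cf is fixed by the q-power map on S
  have hCId : ∀ x ∈ S, (Cf x)^q = Cf x := by
    intro x hx
    have hMx := hMS x hx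
    obtain ⟨hx1, k, hk | hk⟩ := (hSchar x).mp hx
    · have hqM : (q:ℤ) * M x = M x + (N:ℤ) * k := by
        have : (((q:ℤ) * M x : ℤ):ℝ) = ((M x + (N:ℤ) * k : ℤ):ℝ) := by
          push_cast
          linear_combination (((q:ℝ)-1)/2) * hMx + ((N:ℝ)/2) * hk
        exact_mod_cast this
      rw [hCfdef]
      simp only
      rw [hqdef, hpows n (M x), ← hqdef, hqM,
        show -(M x + (N:ℤ) * k) = -(M x) + (N:ℤ) * (-k) by ring, hshift, hshift]
    · have hqM : (q:ℤ) * M x = -(M x) + (N:ℤ) * k := by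
        have : (((q:ℤ) * M x : ℤ):ℝ) = ((-(M x) + (N:ℤ) * k : ℤ):ℝ) := by
          push_cast
          linear_combination (((q:ℝ)+1)/2) * hMx + ((N:ℝ)/2) * hk
        exact_mod_cast this
      rw [hCfdef]
      simp only
      rw [hqdef, hpows n (M x), ← hqdef, hqM,
        show -(-(M x) + (N:ℤ) * k) = M x + (N:ℤ) * (-k) by ring, hshift, hshift, add_comm]
  -- Cf intertwines gp with the p-power map on S
  have hCfequiv : ∀ x ∈ S, Cf (gp p x) = (Cf x)^p := by
    intro x hx
    have hgx := hSg x hx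
    have hMx := hMS x hx
    have hMg := hMS _ hgx
    have hpow1 : (Cf x)^p = ζ ^ (((p:ℕ):ℤ) * M x) + ζ ^ (-(((p:ℕ):ℤ) * M x)) := by
      rw [hCfdef]
      simp only
      have := hpows 1 (M x)
      rw [pow_one] at this
      exact this
    rw [gp_eq_tf] at hMg ⊢
    obtain ⟨j, hj | hj⟩ := tf_spec ((p:ℝ)*x)
    · have hMgi : M (tf ((p:ℝ)*x)) = (p:ℤ) * M x + (N:ℤ) * (-j) := by
        have : ((M (tf ((p:ℝ)*x)) : ℤ):ℝ) = (((p:ℤ) * M x + (N:ℤ) * (-j) : ℤ):ℝ) := by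
          push_cast
          linear_combination (1/2) * hMg + ((N:ℝ)/2) * hj - ((p:ℝ)/2) * hMx
        exact_mod_cast this
      rw [hCfdef]
      simp only
      rw [hMgi, hshift, show -((p:ℤ) * M x + (N:ℤ) * (-j)) = -((p:ℤ) * M x) + (N:ℤ)*j by ring,
        hshift, hpow1]
    · have hMgi : M (tf ((p:ℝ)*x)) = -((p:ℤ) * M x) + (N:ℤ) * j := by
        have : ((M (tf ((p:ℝ)*x)) : ℤ):ℝ) = ((-((p:ℤ) * M x) + (N:ℤ) * j : ℤ):ℝ) := by
          push_cast
          linear_combination (1/2) * hMg + ((N:ℝ)/2) * hj + ((p:ℝ)/2) * hMx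
        exact_mod_cast this
      rw [hCfdef]
      simp only
      rw [hMgi, hshift, show -(-((p:ℤ) * M x) + (N:ℤ) * j) = (p:ℤ) * M x + (N:ℤ)*(-j) by ring,
        hshift, hpow1, add_comm]
  -- injectivity of Cf on S
  have hzw : ∀ z w : Ω, z ≠ 0 → w ≠ 0 → z + z⁻¹ = w + w⁻¹ → z = w ∨ z * w = 1 := by
    intro z w hz hw h
    have h2 : (z - w) * (z * w - 1) = 0 := by
      linear_combination (z*w) * h - w * (inv_mul_cancel₀ hz) + z * (inv_mul_cancel₀ hw)
    rcases mul_eq_zero.mp h2 with h3 | h3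
    · exact Or.inl (sub_eq_zero.mp h3)
    · exact Or.inr (sub_eq_zero.mp h3)
  have hCfzw : ∀ x, Cf x = ζ ^ (M x) + (ζ ^ (M x))⁻¹ := by
    intro x
    rw [hCfdef]
    simp only [zpow_neg]
  have hinj : Set.InjOn Cf S := by
    intro x hx y hy hCfxy
    obtain ⟨hx1, _⟩ := (hSchar x).mp hx
    obtain ⟨hy1, _⟩ := (hSchar y).mp hy
    have hMx := hMS x hx
    have hMy := hMS y hy
    have hz0 : ζ ^ (M x) ≠ 0 := zpow_ne_zero _ hζ0
    have hw0 : ζ ^ (M y) ≠ 0 := zpow_ne_zero _ hζ0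
    rw [hCfzw, hCfzw] at hCfxy
    rcases hzw _ _ hz0 hw0 hCfxy with h | h
    · have h1 : ζ ^ (M x - M y) = 1 := by
        rw [zpow_sub₀ hζ0, h, div_self hw0]
      obtain ⟨c, hc⟩ := (hζ.zpow_eq_one_iff_dvd _).mp h1
      have hcR : x - y = 2*(c:ℝ) := by
        have hcR' := congrArg (Int.cast : ℤ → ℝ) hc
        push_cast at hcR'
        have h2 : (x - y) * (N:ℝ) = 2*(c:ℝ)*(N:ℝ) := by linarith
        exact mul_right_cancel₀ hN0 h2
      have hc0 : c = 0 := by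
        obtain ⟨hx0, hx1'⟩ := hx1
        obtain ⟨hy0, hy1'⟩ := hy1
        have l1 : (-1:ℝ) ≤ 2*(c:ℝ) := by linarith
        have l2 : (2*(c:ℝ)) ≤ 1 := by linarith
        have l1' : (-1:ℤ) ≤ 2*c := by exact_mod_cast l1
        have l2' : (2*c:ℤ) ≤ 1 := by exact_mod_cast l2
        omega
      rw [hc0] at hcR
      push_cast at hcR
      linarith
    · have h1 : ζ ^ (M x + M y) = 1 := by
        rw [zpow_add₀ hζ0]; exact h
      obtain ⟨c, hc⟩ := (hζ.zpow_eq_one_iff_dvd _).mp h1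
      have hcR : x + y = 2*(c:ℝ) := by
        have hcR' := congrArg (Int.cast : ℤ → ℝ) hc
        push_cast at hcR'
        have h2 : (x + y) * (N:ℝ) = 2*(c:ℝ)*(N:ℝ) := by linarith
        exact mul_right_cancel₀ hN0 h2
      obtain ⟨hx0, hx1'⟩ := hx1
      obtain ⟨hy0, hy1'⟩ := hy1
      have hc01 : c = 0 ∨ c = 1 := by
        have l1 : (0:ℝ) ≤ 2*(c:ℝ) := by linarith
        have l2 : (2*(c:ℝ)) ≤ 2 := by linarith
        have l1' : (0:ℤ) ≤ 2*c := by exact_mod_cast l1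
        have l2' : (2*c:ℤ) ≤ 2 := by exact_mod_cast l2
        omega
      rcases hc01 with rfl | rfl
      · push_cast at hcR; linarith
      · push_cast at hcR; linarith
  -- the embedding of the Galois field
  haveI : Fintype (GaloisField p n) := Fintype.ofFinite _
  have hcardF : Fintype.card (GaloisField p n) = q := by
    rw [← Nat.card_eq_fintype_card, GaloisField.card p n (by omega), hqdef]
  haveI : Algebra.IsAlgebraic (ZMod p) (GaloisField p n) :=
    Algebra.IsAlgebraic.of_finite (ZMod p) (GaloisField p n)
  let emb : GaloisField p n →ₐ[ZMod p] Ω := IsAlgClosed.lift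
  have hembinj : Function.Injective emb := emb.toRingHom.injective
  have hrange1 : ∀ b : GaloisField p n, (emb b)^q = emb b := by
    intro b
    rw [← map_pow]
    congr 1
    conv_rhs => rw [← FiniteField.pow_card b]
    rw [hcardF]
  have hroots : ∀ a : Ω, a ^ q = a → a ∈ Set.range emb := by
    intro a ha
    by_contra hcon
    set φ : Polynomial Ω := Polynomial.X ^ q - Polynomial.X with hφdef
    have hφdeg : φ.natDegree = q := by
      rw [hφdef, Polynomial.natDegree_sub_eq_left_of_natDegree_lt]
      · exact Polynomial.natDegree_X_pow q
      · rw [Polynomial.natDegree_X_pow, Polynomial.natDegree_X]; omega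
    have hφ0 : φ ≠ 0 := by
      intro h
      rw [h, Polynomial.natDegree_zero] at hφdeg
      omega
    set T : Finset Ω := Finset.univ.image emb with hT
    have hTcard : T.card = q := by
      rw [hT, Finset.card_image_of_injective _ hembinj, Finset.card_univ, hcardF]
    have hTsub : ∀ b ∈ insert a T, b ∈ φ.roots.toFinset := by
      intro b hb
      rw [Multiset.mem_toFinset, Polynomial.mem_roots hφ0]
      have hb' : b ^ q = b := by
        rcases Finset.mem_insert.mp hb with rfl | hbT
        · exact ha
        · obtain ⟨c, _, rfl⟩ := Finset.mem_image.mp hbT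
          exact hrange1 c
      rw [hφdef]
      simp [Polynomial.IsRoot, hb']
    have haT : a ∉ T := by
      intro h
      obtain ⟨c, _, rfl⟩ := Finset.mem_image.mp h
      exact hcon ⟨c, rfl⟩
    have hcard2 : q + 1 ≤ φ.roots.toFinset.card := by
      calc q + 1 = (insert a T).card := by rw [Finset.card_insert_of_notMem haT, hTcard]
        _ ≤ _ := Finset.card_le_card (fun b hb => hTsub b hb)
    have hcard3 : φ.roots.toFinset.card ≤ q :=
      le_trans (Multiset.toFinset_card_le _) (le_trans (Polynomial.card_roots' φ) (le_of_eq hφdeg))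
    omega
  -- surjectivity
  have hq0 : q ≠ 0 := by omega
  have hsurj : ∀ b : GaloisField p n, ∃ x ∈ S, Cf x = emb b := by
    intro b
    set a : Ω := emb b with hadef
    have ha : a ^ q = a := hrange1 b
    obtain ⟨z, hz⟩ := IsAlgClosed.exists_root (k := Ω)
      (Polynomial.X^2 - Polynomial.C a * Polynomial.X + Polynomial.C 1) (by
        have : (Polynomial.X^2 - Polynomial.C a * Polynomial.X + Polynomial.C 1 : Polynomial Ω).degree = 2 := by
          compute_degree!
        rw [this]; norm_num)
    have hzeq : z^2 - a*z + 1 = 0 := by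
      have := hz
      simp only [Polynomial.IsRoot, Polynomial.eval_add, Polynomial.eval_sub,
        Polynomial.eval_mul, Polynomial.eval_pow, Polynomial.eval_X, Polynomial.eval_C] at this
      linear_combination this
    have hz0 : z ≠ 0 := by
      intro h
      rw [h] at hzeq
      simp at hzeq
    have hzmul : z * (a - z) = 1 := by linear_combination -hzeq
    have hzinv : z⁻¹ = a - z := inv_eq_of_mul_eq_one_right hzmul
    have hzsum : z + z⁻¹ = a := by rw [hzinv]; ring
    have hzz : z * z⁻¹ = 1 := mul_inv_cancel₀ hz0
    have hfrobz : (z^q)^2 - a*(z^q) + 1 = 0 := by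
      have h1 : (z^2 - a*z + 1)^q = (0:Ω) := by rw [hzeq]; exact zero_pow hq0
      have e1 : ((z^2 - a*z + 1 : Ω))^q = (z^q)^2 - a^q*(z^q) + 1 := by
        rw [hqdef, add_pow_char_pow, sub_pow_char_pow, one_pow, mul_pow,
          ← pow_mul, ← pow_mul, mul_comm 2 (p^n), pow_mul z (p^n) 2]
      rw [e1, ha] at h1
      exact h1
    have hfact : (z^q - z) * (z^q - z⁻¹) = 0 := by
      linear_combination hfrobz - (z^q) * hzsum + hzz
    -- common final construction
    have hfinish : ∀ i : ℤ, ζ ^ i = z →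
        (∃ j : ℤ, (((q:ℝ)-1) * (2*(i:ℝ)/N) = 2*(j:ℝ)) ∨ (((q:ℝ)+1) * (2*(i:ℝ)/N) = 2*(j:ℝ))) →
        ∃ x ∈ S, Cf x = a := by
      intro i hζi hdiv
      set u : ℝ := 2*(i:ℝ)/N with hudef
      have huN : u*N = 2*(i:ℝ) := by rw [hudef]; field_simp
      set x : ℝ := tf u with hxdef
      have hxS : x ∈ S := by
        rw [hSchar]
        refine ⟨tf_mem u, ?_⟩
        obtain ⟨k, hk | hk⟩ := tf_spec u
        all_goals rw [← hxdef] at hk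
        · obtain ⟨j, hj | hj⟩ := hdiv
          · exact ⟨j - k*((q:ℤ)-1), Or.inl (by rw [hk]; push_cast; linear_combination hj)⟩
          · exact ⟨j - k*((q:ℤ)+1), Or.inr (by rw [hk]; push_cast; linear_combination hj)⟩
        · obtain ⟨j, hj | hj⟩ := hdiv
          · exact ⟨k*((q:ℤ)-1) - j, Or.inl (by rw [hk]; push_cast; linear_combination -hj)⟩
          · exact ⟨k*((q:ℤ)+1) - j, Or.inr (by rw [hk]; push_cast; linear_combination -hj)⟩
      refine ⟨x, hxS, ?_⟩
      have hMx := hMS x hxS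
      obtain ⟨k, hk | hk⟩ := tf_spec u
      all_goals rw [← hxdef] at hk
      · have hMxi : M x = i + (N:ℤ) * (-k) := by
          have : ((M x:ℤ):ℝ) = ((i + (N:ℤ)*(-k) : ℤ):ℝ) := by
            push_cast
            linear_combination (1/2)*hMx + ((N:ℝ)/2)*hk + (1/2)*huN

          exact_mod_cast this
        rw [hCfdef]
        simp only
        rw [hMxi, hshift, show -(i + (N:ℤ)*(-k)) = -i + (N:ℤ)*k by ring, hshift,
          zpow_neg, hζi]
        exact hzsum
      · have hMxi : M x = -i + (N:ℤ) * k := by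
          have : ((M x:ℤ):ℝ) = ((-i + (N:ℤ)*k : ℤ):ℝ) := by
            push_cast
            linear_combination (1/2)*hMx + ((N:ℝ)/2)*hk - (1/2)*huN
          exact_mod_cast this
        rw [hCfdef]
        simp only
        rw [hMxi, hshift, show -(-i + (N:ℤ)*k) = i + (N:ℤ)*(-k) by ring, hshift,
          zpow_neg, hζi, add_comm]
        exact hzsum
    have hq1R : ((q:ℝ) - 1) ≠ 0 := by
      have : (2:ℝ) ≤ (q:ℝ) := by exact_mod_cast hq2
      linarith
    have hNfact : (N:ℤ) = ((q:ℤ)-1)*((q:ℤ)+1) := by rw [hNZ]; ring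
    rcases mul_eq_zero.mp hfact with hcase | hcase
    · -- z^q = z
      have hzq : z^q = z := sub_eq_zero.mp hcase
      have h1 : z ^ ((q:ℤ) - 1) = 1 := by
        rw [zpow_sub₀ hz0, zpow_natCast, zpow_one, hzq, div_self hz0]
      have hzN : z ^ N = 1 := by
        rw [← zpow_natCast z N, hNfact, zpow_mul, h1, one_zpow]
      obtain ⟨i, hiN, hζi⟩ := hζ.eq_pow_of_pow_eq_one hzN
      have hζiz : ζ ^ ((i:ℕ):ℤ) = z := by rw [zpow_natCast]; exact hζi
      have h2 : ζ ^ (((i:ℕ):ℤ) * ((q:ℤ)-1)) = 1 := by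
        rw [zpow_mul, hζiz, h1]
      obtain ⟨c, hc⟩ := (hζ.zpow_eq_one_iff_dvd _).mp h2
      have hic : ((i:ℕ):ℤ) = ((q:ℤ)+1) * c := by
        have h3 : ((q:ℤ)-1) * (((i:ℕ):ℤ)) = ((q:ℤ)-1) * (((q:ℤ)+1) * c) := by
          rw [hNfact] at hc
          linear_combination hc
        have hq1Z : ((q:ℤ) - 1) ≠ 0 := by
          have : (2:ℤ) ≤ (q:ℤ) := by exact_mod_cast hq2
          omega
        exact mul_left_cancel₀ hq1Z h3
      refine hfinish i hζiz ⟨c, Or.inl ?_⟩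
      have hicR : ((i:ℕ):ℝ) = ((q:ℝ)+1) * (c:ℝ) := by exact_mod_cast hic
      field_simp
      rw [hNR, Int.cast_natCast, hicR]
      ring
    · -- z^q = z⁻¹
      have hzq : z^q = z⁻¹ := sub_eq_zero.mp hcase
      have h1 : z ^ ((q:ℤ) + 1) = 1 := by
        rw [zpow_add₀ hz0, zpow_natCast, zpow_one, hzq, inv_mul_cancel₀ hz0]
      have hzN : z ^ N = 1 := by
        rw [← zpow_natCast z N, hNfact, mul_comm, zpow_mul, h1, one_zpow]
      obtain ⟨i, hiN, hζi⟩ := hζ.eq_pow_of_pow_eq_one hzN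
      have hζiz : ζ ^ ((i:ℕ):ℤ) = z := by rw [zpow_natCast]; exact hζi
      have h2 : ζ ^ (((i:ℕ):ℤ) * ((q:ℤ)+1)) = 1 := by
        rw [zpow_mul, hζiz, h1]
      obtain ⟨c, hc⟩ := (hζ.zpow_eq_one_iff_dvd _).mp h2
      have hic : ((i:ℕ):ℤ) = ((q:ℤ)-1) * c := by
        have h3 : ((q:ℤ)+1) * (((i:ℕ):ℤ)) = ((q:ℤ)+1) * (((q:ℤ)-1) * c) := by
          rw [hNfact] at hc
          linear_combination hc
        have hq1Z : ((q:ℤ) + 1) ≠ 0 := by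
          have : (2:ℤ) ≤ (q:ℤ) := by exact_mod_cast hq2
          omega
        exact mul_left_cancel₀ hq1Z h3
      refine hfinish i hζiz ⟨c, Or.inr ?_⟩
      have hicR : ((i:ℕ):ℝ) = ((q:ℝ)-1) * (c:ℝ) := by exact_mod_cast hic
      field_simp
      rw [hNR, Int.cast_natCast, hicR]
      ring
  -- assemble
  have hCfrange : ∀ x ∈ S, ∃ b : GaloisField p n, emb b = Cf x := by
    intro x hx
    exact hroots (Cf x) (hCId x hx)
  set einv : Ω → GaloisField p n := Function.invFun emb with heinv
  have hleft : ∀ b, einv (emb b) = b := fun b => Function.leftInverse_invFun hembinj b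
  refine ⟨fun x => einv (Cf x), ⟨fun x _ => Set.mem_univ _, ?_, ?_⟩, ?_⟩
  · intro x hx y hy hxy
    obtain ⟨bx, hbx⟩ := hCfrange x hx
    obtain ⟨by', hby⟩ := hCfrange y hy
    apply hinj hx hy
    simp only at hxy
    rw [← hbx, ← hby, hleft, hleft] at hxy
    rw [← hbx, ← hby, hxy]
  · intro b _
    obtain ⟨x, hxS, hCfx⟩ := hsurj b
    exact ⟨x, hxS, by simp only; rw [hCfx, hleft]⟩
  · intro x hx
    have hgx : gp p x ∈ S := hSg x hx
    obtain ⟨bx, hbx⟩ := hCfrange x hx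
    obtain ⟨bg, hbg⟩ := hCfrange _ hgx
    have hCe : Cf (gp p x) = (Cf x)^p := hCfequiv x hx
    simp only
    rw [← hbx, ← hbg, hleft, hleft]
    apply hembinj
    rw [map_pow, hbx, hbg, hCe]
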